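/- Palindromicity of the Minkus coefficients: for p, q coprime, p odd, 0 < p < q, with ε_i = (-1)^⌊ip/q⌋ and partial sums S_k = Σ_{i=0}^{k} ε_i (ε_0 = 1), the multiset {(-1)^k at position S_k : 0 ≤ k ≤ q-1} is symmetric, i.e., the Laurent polynomial f(t) = Σ_{k=0}^{q-1} (-1)^k t^{S_k} satisfies f(t) = ± t^n f(1/t) for some integer n. -/

import Mathlib

open LaurentPolynomial

theorem minkus_palindromic (p q : ℕ) (hp : 0 < p) (hpq : p < q)
    (hodd : Odd p) (hcop : Nat.gcd p q = 1) :
    ∃ (n : ℤ) (s : ℤ), (s = 1 ∨ s = -1) ∧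
      (∑ k ∈ Finset.range q,
          C ((-1 : ℤ) ^ k) *
            T (∑ i ∈ Finset.range (k + 1), ((-1 : ℤ) ^ ((i * p) / q) : ℤ)))
        = C s * T n *
          (∑ k ∈ Finset.range q,
            C ((-1 : ℤ) ^ k) *
              T (-(∑ i ∈ Finset.range (k + 1), ((-1 : ℤ) ^ ((i * p) / q) : ℤ)))) := by
  have hq : 0 < q := lt_trans hp hpq
  -- key division identity
  have hdivkey : ∀ i, 0 < i → i < q → ((q - i) * p) / q + (i * p) / q = p - 1 := by
    intro i h0 hi
    have hnd : ¬ q ∣ i * p := by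
      intro h
      have hqp : Nat.Coprime q p := Nat.coprime_comm.mp hcop
      have hdi : q ∣ i := hqp.dvd_of_dvd_mul_right h
      have := Nat.le_of_dvd h0 hdi
      omega
    set a := (i * p) / q with ha
    set r := (i * p) % q with hr
    have h1 : q * a + r = i * p := Nat.div_add_mod _ _
    have hr0 : 0 < r :=
      Nat.pos_of_ne_zero (fun h => hnd (Nat.dvd_of_mod_eq_zero h))
    have hrq : r < q := Nat.mod_lt _ hq
    have hap : a < p := by
      have hlt : i * p < q * p := (Nat.mul_lt_mul_right hp).mpr hi
      exact Nat.div_lt_of_lt_mul hlt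
    have heq : (q - i) * p = (q - r) + (p - 1 - a) * q := by
      have h1' : (q : ℤ) * a + r = i * p := by exact_mod_cast h1
      zify [hi.le, hrq.le, (show a ≤ p - 1 by omega), hp]
      linear_combination h1'
    rw [heq, Nat.add_mul_div_right _ _ hq, Nat.div_eq_of_lt (by omega)]
    omega
  -- epsilon symmetry
  have hepskey : ∀ i, 0 < i → i < q →
      ((-1 : ℤ)) ^ (((q - i) * p) / q) = (-1 : ℤ) ^ ((i * p) / q) := by
    intro i h0 hi
    have h := hdivkey i h0 hi
    obtain ⟨m, hm⟩ := hodd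
    rcases Nat.even_or_odd ((i * p) / q) with he | he
    · have he' : Even (((q - i) * p) / q) := by
        rw [Nat.even_iff] at he ⊢; omega
      rw [Even.neg_one_pow he', Even.neg_one_pow he]
    · have he' : Odd (((q - i) * p) / q) := by
        rw [Nat.odd_iff] at he ⊢; omega
      rw [Odd.neg_one_pow he', Odd.neg_one_pow he]
  -- the partial sums
  set S : ℕ → ℤ := fun k => ∑ i ∈ Finset.range (k + 1), ((-1 : ℤ) ^ ((i * p) / q) : ℤ)
    with hSdef
  have hSapp : ∀ k, (∑ i ∈ Finset.range (k + 1), ((-1 : ℤ) ^ ((i * p) / q) : ℤ)) = S k :=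
    fun k => rfl
  -- symmetry of partial sums
  have hSsym : ∀ k, k < q → S (q - 1 - k) = S (q - 1) + 1 - S k := by
    intro k hk
    have hq1 : q - 1 + 1 = q := by omega
    have hqk1 : q - 1 - k + 1 = q - k := by omega
    have e0 : S (q - 1) = S (q - 1 - k) +
        ∑ i ∈ Finset.Ico (q - k) q, ((-1 : ℤ) ^ ((i * p) / q) : ℤ) := by
      simp only [hSdef, hq1, hqk1]
      rw [Finset.range_eq_Ico, Finset.range_eq_Ico]
      exact (Finset.sum_Ico_consecutive (fun i => ((-1 : ℤ) ^ ((i * p) / q) : ℤ)) (Nat.zero_le (q - k)) (Nat.sub_le q k)).symm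
    have e1 : ∑ i ∈ Finset.Ico (q - k) q, ((-1 : ℤ) ^ ((i * p) / q) : ℤ)
        = ∑ j ∈ Finset.range k, ((-1 : ℤ) ^ (((q - k + j) * p) / q) : ℤ) := by
      rw [Finset.sum_Ico_eq_sum_range]
      apply Finset.sum_congr (by congr 1; omega)
      intros; rfl
    have e2 : ∑ j ∈ Finset.range k, ((-1 : ℤ) ^ (((q - k + j) * p) / q) : ℤ)
        = ∑ j ∈ Finset.range k, ((-1 : ℤ) ^ (((k - j) * p) / q) : ℤ) := by
      apply Finset.sum_congr rfl
      intro j hj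
      rw [Finset.mem_range] at hj
      have h1 : q - (k - j) = q - k + j := by omega
      have := hepskey (k - j) (by omega) (by omega)
      rw [h1] at this
      exact this
    have e3 : ∑ j ∈ Finset.range k, ((-1 : ℤ) ^ (((k - j) * p) / q) : ℤ)
        = ∑ j ∈ Finset.range k, ((-1 : ℤ) ^ (((j + 1) * p) / q) : ℤ) := by
      rw [← Finset.sum_range_reflect (fun j => ((-1 : ℤ) ^ (((j + 1) * p) / q) : ℤ)) k]
      apply Finset.sum_congr rfl
      intro j hj
      rw [Finset.mem_range] at hj
      rw [show k - 1 - j + 1 = k - j by omega]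
    have e4 : S k = 1 + ∑ j ∈ Finset.range k, ((-1 : ℤ) ^ (((j + 1) * p) / q) : ℤ) := by
      simp only [hSdef]
      rw [Finset.sum_range_succ']
      simp only [Nat.zero_mul, Nat.zero_div, pow_zero]
      ring
    rw [e1, e2, e3] at e0
    linarith [e0, e4]
  -- main computation
  refine ⟨S (q - 1) + 1, (-1 : ℤ) ^ (q - 1), ?_, ?_⟩
  · rcases Nat.even_or_odd (q - 1) with h | h
    · left; exact h.neg_one_pow
    · right; exact h.neg_one_pow
  · simp only [hSapp]
    rw [Finset.mul_sum]
    conv_lhs => rw [← Finset.sum_range_reflect]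
    apply Finset.sum_congr rfl
    intro k hk
    rw [Finset.mem_range] at hk
    rw [hSsym k hk]
    have hc : ((-1 : ℤ)) ^ (q - 1 - k) = (-1 : ℤ) ^ (q - 1) * (-1 : ℤ) ^ k := by
      have h1 : q - 1 - k + k = q - 1 := by omega
      calc ((-1 : ℤ)) ^ (q - 1 - k)
          = (-1 : ℤ) ^ (q - 1 - k) * ((-1 : ℤ) * (-1)) ^ k := by norm_num
        _ = ((-1 : ℤ) ^ (q - 1 - k) * (-1 : ℤ) ^ k) * (-1 : ℤ) ^ k := by
            rw [mul_pow]; ring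
        _ = (-1 : ℤ) ^ (q - 1) * (-1 : ℤ) ^ k := by rw [← pow_add, h1]
    rw [hc, map_mul]
    rw [show S (q - 1) + 1 - S k = (S (q - 1) + 1) + (-(S k)) by ring, T_add]
    ring
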